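/- Let L and F be finite-dimensional coalgebras over a field k, let x : L → End(F) be a linear map whose values are right invariant operators on F, let π_x : T(L) → End(T(F)) be the associated algebra homomorphism, and let π_x¹ : T(L) → End(F) be the unique algebra homomorphism with π_x¹(1) = id and π_x¹(ι(l)) = x(l). If C ⊆ T(L) is a linear subspace such that ε_{T(L)}(C) = 0, π_x¹(C) = 0, and Δ_{T(L)}(C) ⊆ C ⊗ T(L) + T(L) ⊗ C, then C ⊆ ker(π_x); i.e. every coideal of T(L) contained in ker(ε_{T(L)}) ∩ ker(π_x¹) consists of relations of the realized bialgebra U_x. -/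
import Mathlib


open TensorProduct

/-- The unique algebra homomorphism `Δ_{T(L)} : T(L) → T(L) ⊗ T(L)` with
`Δ_{T(L)}(ι l) = (ι ⊗ ι)(Δ_L l)`. -/
noncomputable def comulTensorAlgebra (k L : Type*) [Field k] [AddCommGroup L] [Module k L]
    [Coalgebra k L] :
    TensorAlgebra k L →ₐ[k] TensorAlgebra k L ⊗[k] TensorAlgebra k L :=
  TensorAlgebra.lift k
    (TensorProduct.map (TensorAlgebra.ι k) (TensorAlgebra.ι k) ∘ₗ Coalgebra.comul)

/-- The unique algebra homomorphism `ε_{T(L)} : T(L) → k` with `ε_{T(L)}(ι l) = ε_L l`. -/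
noncomputable def counitTensorAlgebra (k L : Type*) [Field k] [AddCommGroup L] [Module k L]
    [Coalgebra k L] : TensorAlgebra k L →ₐ[k] k :=
  TensorAlgebra.lift k (Coalgebra.counit : L →ₗ[k] k)

set_option maxHeartbeats 1000000 in
set_option synthInstance.maxHeartbeats 200000 in
/-- every coideal of `T(L)` contained in `ker ε_{T(L)} ∩ ker π_x¹`
consists of relations of the realized bialgebra `U_x`, i.e. is contained in `ker π_x`. -/
theorem coideal_in_ker_counit_and_minimal_rep_is_relations
    (k L F : Type*) [Field k]
    [AddCommGroup L] [Module k L] [Coalgebra k L] [FiniteDimensional k L]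
    [AddCommGroup F] [Module k F] [Coalgebra k F] [FiniteDimensional k F]
    (x : L →ₗ[k] Module.End k F)
    (hx : ∀ l : L, Coalgebra.comul ∘ₗ (x l : F →ₗ[k] F) =
      TensorProduct.map (x l) LinearMap.id ∘ₗ Coalgebra.comul)
    (X : L →ₗ[k] Module.End k (TensorAlgebra k F))
    (hX1 : ∀ l : L, X l 1 = Coalgebra.counit (R := k) l • (1 : TensorAlgebra k F))
    (hX2 : ∀ (l : L) (f : F), X l (TensorAlgebra.ι k f) = TensorAlgebra.ι k (x l f))
    (hX3 : ∀ (l : L) (w₁ w₂ : TensorAlgebra k F), X l (w₁ * w₂) =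
      LinearMap.mul' k (TensorAlgebra k F)
        (TensorProduct.map (LinearMap.applyₗ w₁ ∘ₗ X) (LinearMap.applyₗ w₂ ∘ₗ X)
          (Coalgebra.comul (R := k) l)))
    (πx : TensorAlgebra k L →ₐ[k] Module.End k (TensorAlgebra k F))
    (hπx : ∀ l : L, πx (TensorAlgebra.ι k l) = X l)
    (πx1 : TensorAlgebra k L →ₐ[k] Module.End k F)
    (hπx1 : ∀ l : L, πx1 (TensorAlgebra.ι k l) = x l)
    (C : Submodule k (TensorAlgebra k L))
    (hCε : ∀ c ∈ C, counitTensorAlgebra k L c = 0)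
    (hCπ : ∀ c ∈ C, πx1 c = 0)
    (hCΔ : ∀ c ∈ C, comulTensorAlgebra k L c ∈
      LinearMap.range (TensorProduct.map C.subtype
        (LinearMap.id : TensorAlgebra k L →ₗ[k] TensorAlgebra k L)) ⊔
      LinearMap.range (TensorProduct.map
        (LinearMap.id : TensorAlgebra k L →ₗ[k] TensorAlgebra k L) C.subtype)) :
    ∀ c ∈ C, πx c = 0 := by
  classical
  -- ρ a = (πx ⊗ πx)(Δ a) as an endomorphism of T(F) ⊗ T(F)
  set ρ : TensorAlgebra k L →ₐ[k] Module.End k (TensorAlgebra k F ⊗[k] TensorAlgebra k F) :=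
    ((Module.endTensorEndAlgHom (R := k) (S := k) (A := k)
      (M := TensorAlgebra k F) (N := TensorAlgebra k F)).comp
      ((Algebra.TensorProduct.map πx πx).comp (comulTensorAlgebra k L))) with hρ
  have hcomul_ι : ∀ l : L, comulTensorAlgebra k L (TensorAlgebra.ι k l) =
      TensorProduct.map (TensorAlgebra.ι k) (TensorAlgebra.ι k) (Coalgebra.comul l) := by
    intro l
    simp [comulTensorAlgebra, TensorAlgebra.lift_ι_apply]
  have hcounit_ι : ∀ l : L, counitTensorAlgebra k L (TensorAlgebra.ι k l) =
      Coalgebra.counit (R := k) l := by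
    intro l
    simp [counitTensorAlgebra, TensorAlgebra.lift_ι_apply]
  -- Lemma A : action on 1
  have hA : ∀ a : TensorAlgebra k L, πx a 1 = counitTensorAlgebra k L a • 1 := by
    intro a
    induction a using TensorAlgebra.induction with
    | algebraMap r =>
        simp [AlgHom.commutes, Module.algebraMap_end_apply, Algebra.algebraMap_eq_smul_one]
    | ι l => rw [hπx, hX1, hcounit_ι]
    | mul a b ha hb =>
        rw [map_mul, Module.End.mul_apply, hb, map_smul, ha, smul_smul, map_mul, mul_comm]
    | add a b ha hb =>
        rw [map_add, LinearMap.add_apply, ha, hb, map_add, add_smul]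
  -- Lemma B : action on ι f
  have hB : ∀ (a : TensorAlgebra k L) (f : F),
      πx a (TensorAlgebra.ι k f) = TensorAlgebra.ι k (πx1 a f) := by
    intro a
    induction a using TensorAlgebra.induction with
    | algebraMap r =>
        intro f
        simp [AlgHom.commutes, Module.algebraMap_end_apply]
    | ι l => intro f; rw [hπx, hX2, hπx1]
    | mul a b ha hb =>
        intro f
        rw [map_mul, Module.End.mul_apply, hb, ha, map_mul, Module.End.mul_apply]
    | add a b ha hb =>
        intro f
        rw [map_add, LinearMap.add_apply, ha, hb, map_add, LinearMap.add_apply, map_add]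
  -- Lemma C : action on products
  have hC : ∀ a : TensorAlgebra k L,
      (LinearMap.mul' k (TensorAlgebra k F)) ∘ₗ (ρ a : Module.End k _) =
        (πx a : Module.End k _) ∘ₗ LinearMap.mul' k (TensorAlgebra k F) := by
    intro a
    induction a using TensorAlgebra.induction with
    | algebraMap r =>
        rw [AlgHom.commutes, AlgHom.commutes]
        apply TensorProduct.ext'
        intro w₁ w₂
        simp [Module.algebraMap_end_apply]
    | ι l =>
        apply TensorProduct.ext'
        intro w₁ w₂
        have key : ∀ t : L ⊗[k] L,
            Module.endTensorEndAlgHom (R := k) (S := k) (A := k)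
              ((Algebra.TensorProduct.map πx πx)
                (TensorProduct.map (TensorAlgebra.ι k) (TensorAlgebra.ι k) t)) (w₁ ⊗ₜ[k] w₂) =
            TensorProduct.map (LinearMap.applyₗ w₁ ∘ₗ (X : L →ₗ[k] _))
              (LinearMap.applyₗ w₂ ∘ₗ (X : L →ₗ[k] _)) t := by
          intro t
          induction t with
          | zero => simp
          | tmul l₁ l₂ =>
              rw [TensorProduct.map_tmul, Algebra.TensorProduct.map_tmul, hπx, hπx,
                Module.endTensorEndAlgHom_apply, TensorProduct.map_tmul]
              rfl
          | add t₁ t₂ h₁ h₂ =>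
              simp only [map_add, LinearMap.add_apply, h₁, h₂]
        rw [LinearMap.comp_apply, LinearMap.comp_apply, LinearMap.mul'_apply, hρ,
          AlgHom.comp_apply, AlgHom.comp_apply, hcomul_ι, key, hπx, hX3]
    | mul a b ha hb =>
        rw [map_mul, map_mul, Module.End.mul_eq_comp, Module.End.mul_eq_comp,
          ← LinearMap.comp_assoc, ha, LinearMap.comp_assoc, hb, ← LinearMap.comp_assoc]
    | add a b ha hb =>
        rw [map_add, map_add, LinearMap.comp_add, LinearMap.add_comp, ha, hb]
  -- main induction
  suffices h : ∀ w : TensorAlgebra k F, ∀ c ∈ C, πx c w = 0 by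
    intro c hc
    exact LinearMap.ext fun w => h w c hc
  intro w
  induction w using TensorAlgebra.induction with
  | algebraMap r =>
      intro c hc
      rw [Algebra.algebraMap_eq_smul_one, map_smul, hA, hCε c hc, zero_smul, smul_zero]
  | ι f =>
      intro c hc
      rw [hB, hCπ c hc]
      simp
  | mul w₁ w₂ h1 h2 =>
      intro c hc
      have := DFunLike.congr_fun (hC c) (w₁ ⊗ₜ[k] w₂)
      simp only [LinearMap.comp_apply, LinearMap.mul'_apply] at this
      rw [← this, hρ]
      obtain ⟨u, hu, v, hv, huv⟩ := Submodule.mem_sup.mp (hCΔ c hc)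
      obtain ⟨u₀, rfl⟩ := hu
      obtain ⟨v₀, rfl⟩ := hv
      simp only [AlgHom.comp_apply]
      rw [← huv, map_add, map_add, LinearMap.add_apply]
      have key1 : ∀ u₀ : (C : Type _) ⊗[k] TensorAlgebra k L,
          Module.endTensorEndAlgHom (R := k) (S := k) (A := k)
            ((Algebra.TensorProduct.map πx πx)
              (TensorProduct.map C.subtype LinearMap.id u₀)) (w₁ ⊗ₜ[k] w₂) = 0 := by
        intro u₀
        induction u₀ with
        | zero => simp
        | tmul c' b =>
            simp [Module.endTensorEndAlgHom_apply, h1 c' c'.2]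
        | add t₁ t₂ ht₁ ht₂ =>
            simp only [map_add, LinearMap.add_apply, ht₁, ht₂, add_zero]
      have key2 : ∀ v₀ : TensorAlgebra k L ⊗[k] (C : Type _),
          Module.endTensorEndAlgHom (R := k) (S := k) (A := k)
            ((Algebra.TensorProduct.map πx πx)
              (TensorProduct.map LinearMap.id C.subtype v₀)) (w₁ ⊗ₜ[k] w₂) = 0 := by
        intro v₀
        induction v₀ with
        | zero => simp
        | tmul a c' =>
            simp [Module.endTensorEndAlgHom_apply, h2 c' c'.2]
        | add t₁ t₂ ht₁ ht₂ =>
            simp only [map_add, LinearMap.add_apply, ht₁, ht₂, add_zero]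
      rw [key1, key2, add_zero, map_zero]
  | add w₁ w₂ h1 h2 =>
      intro c hc
      rw [map_add, h1 c hc, h2 c hc, add_zero]
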